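/- Assume condition (C.1) holds, and suppose that lim_{n→∞} ∫_{I(t)} R_{λ^p,μ,n}(t,s) Λ(s,x,x̃)^p μ(ds) = 0 for every t ∈ I and all x, x̃ in the image Ψ(X). Then Ψ admits at most one fixed point, i.e. there is at most one x ∈ X with Ψ(x) = x. -/

import Mathlib

open MeasureTheory ENNReal Filter

/-- The resolvent sequence of a non-negative kernel `k` with respect to a measure `μ`:
`res r μ k 0 = k` corresponds to `R_{k,μ,1}` and
`res r μ k (n+1) t s = ∫_{[s,t]} k t u * res r μ k n u s ∂μ` corresponds to `R_{k,μ,n+2}`. -/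
noncomputable def res {I : Type*} [MeasurableSpace I] (r : I → I → Prop)
    (μ : Measure I) (k : I → I → ℝ≥0∞) : ℕ → I → I → ℝ≥0∞
  | 0, t, s => k t s
  | n + 1, t, s => ∫⁻ u in {u : I | r s u ∧ r u t}, k t u * res r μ k n u s ∂μ

/-- **Uniqueness of fixed points** (Lemma 4 of the paper): under condition (C.1), if
`∫_{I(t)} R_{λ^p,μ,n}(t,s) Λ(s,x,x̃)^p μ(ds) → 0` for every `t ∈ I` and all
`x, x̃ ∈ Ψ(X)`, then `Ψ` admits at most one fixed point
(the index is shifted by one: `res … n = R_{·,n+1}`). -/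
theorem uniqueness_of_fixed_points {I X : Type*} [MeasurableSpace I] [Preorder I]
    [Nonempty X]
    (hΔ : MeasurableSet {q : I × I | q.2 ≤ q.1})
    (d : I → X → X → ℝ≥0∞)
    (hd0 : ∀ x y : X, x = y ↔ ∀ t : I, d t x y = 0)
    (hdmeas : ∀ x y : X, Measurable fun t : I => d t x y)
    (Ψ : X → X)
    (Λ : I → X → X → ℝ≥0∞) (hΛmeas : ∀ x y : X, Measurable fun t : I => Λ t x y)
    (μ : Measure I) [SigmaFinite μ]
    (p : ℝ) (hp : 1 ≤ p)
    (lam : I → I → ℝ≥0∞)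
    (hlam : Measurable fun q : {q : I × I // q.2 ≤ q.1} => lam q.1.1 q.1.2)
    (hC1a : ∀ (t : I) (x y : X),
      d t (Ψ x) (Ψ y) ≤ (∫⁻ s in {s : I | s ≤ t}, lam t s ^ p * Λ s x y ^ p ∂μ) ^ (1 / p))
    (hC1b : ∀ (t : I) (x y : X), Λ t x y ≤ d t x y)
    (hlim : ∀ (t : I) (x y : X),
      Tendsto (fun n : ℕ =>
          ∫⁻ s in {s : I | s ≤ t},
            res (· ≤ ·) μ (fun a b => lam a b ^ p) n t s * Λ s (Ψ x) (Ψ y) ^ p ∂μ)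
        atTop (nhds 0)) :
    ∀ x y : X, Ψ x = x → Ψ y = y → x = y := by
  classical
  intro x y hx hy
  have hp0 : (0:ℝ) < p := lt_of_lt_of_le one_pos hp
  -- extended kernel
  set K : I × I → ℝ≥0∞ :=
    Function.extend (Subtype.val : {q : I × I // q.2 ≤ q.1} → I × I)
      (fun q => lam q.1.1 q.1.2 ^ p) 0 with hKdef
  have hKmeas : Measurable K :=
    (MeasurableEmbedding.subtype_coe hΔ).measurable_extend (hlam.pow_const p)
      measurable_const
  have hKeq : ∀ t s : I, s ≤ t → K (t, s) = lam t s ^ p := by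
    intro t s h
    have : ((t, s) : I × I) = (⟨(t, s), h⟩ : {q : I × I // q.2 ≤ q.1}).val := rfl
    rw [hKdef, this, Function.Injective.extend_apply Subtype.val_injective]
  -- measurability of lower set
  have hIt : ∀ t : I, MeasurableSet {s : I | s ≤ t} := by
    intro t
    have : {s : I | s ≤ t} = (fun s : I => ((t, s) : I × I)) ⁻¹' {q : I × I | q.2 ≤ q.1} :=
      rfl
    rw [this]
    exact hΔ.preimage (measurable_const.prodMk measurable_id)
  have hInt : ∀ q : I × I, MeasurableSet {u : I | q.2 ≤ u ∧ u ≤ q.1} := by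
    intro q
    have h1 : {u : I | q.2 ≤ u} = (fun u : I => ((u, q.2) : I × I)) ⁻¹' {r : I × I | r.2 ≤ r.1} := rfl
    have h2 : {u : I | u ≤ q.1} = (fun u : I => ((q.1, u) : I × I)) ⁻¹' {r : I × I | r.2 ≤ r.1} := rfl
    have : {u : I | q.2 ≤ u ∧ u ≤ q.1} = {u : I | q.2 ≤ u} ∩ {u : I | u ≤ q.1} := rfl
    rw [this, h1, h2]
    exact (hΔ.preimage (measurable_id.prodMk measurable_const)).inter
      (hΔ.preimage (measurable_const.prodMk measurable_id))
  -- jointly measurable resolvent with extended kernel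
  let res' : ℕ → I × I → ℝ≥0∞ := fun n => Nat.rec K
    (fun _ prev q => ∫⁻ u in {u : I | q.2 ≤ u ∧ u ≤ q.1}, K (q.1, u) * prev (u, q.2) ∂μ) n
  have hres0 : res' 0 = K := rfl
  have hresS : ∀ n q, res' (n + 1) q =
      ∫⁻ u in {u : I | q.2 ≤ u ∧ u ≤ q.1}, K (q.1, u) * res' n (u, q.2) ∂μ :=
    fun n q => rfl
  have hres'meas : ∀ n, Measurable (res' n) := by
    intro n
    induction n with
    | zero => exact hKmeas
    | succ n ih =>
      have : res' (n + 1) = fun q : I × I =>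
          ∫⁻ u, ({r : (I × I) × I | r.1.2 ≤ r.2 ∧ r.2 ≤ r.1.1}.indicator
            (fun r => K (r.1.1, r.2) * res' n (r.2, r.1.2))) (q, u) ∂μ := by
        funext q
        rw [hresS]
        rw [← lintegral_indicator (hInt q)]
        refine lintegral_congr fun u => ?_
        by_cases h : q.2 ≤ u ∧ u ≤ q.1
        · rw [Set.indicator_of_mem (show u ∈ {u : I | q.2 ≤ u ∧ u ≤ q.1} from h)
            (fun u => K (q.1, u) * res' n (u, q.2))]
          exact (Set.indicator_of_mem
            (show ((q, u) : (I × I) × I) ∈ {r : (I × I) × I | r.1.2 ≤ r.2 ∧ r.2 ≤ r.1.1} from h)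
            (fun r : (I × I) × I => K (r.1.1, r.2) * res' n (r.2, r.1.2))).symm
        · rw [Set.indicator_of_notMem (show u ∉ {u : I | q.2 ≤ u ∧ u ≤ q.1} from h)
            (fun u => K (q.1, u) * res' n (u, q.2))]
          exact (Set.indicator_of_notMem
            (show ((q, u) : (I × I) × I) ∉ {r : (I × I) × I | r.1.2 ≤ r.2 ∧ r.2 ≤ r.1.1} from h)
            (fun r : (I × I) × I => K (r.1.1, r.2) * res' n (r.2, r.1.2))).symm
      rw [this]
      have hsetm : MeasurableSet {r : (I × I) × I | r.1.2 ≤ r.2 ∧ r.2 ≤ r.1.1} := by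
        have h1 : {r : (I × I) × I | r.1.2 ≤ r.2} =
            (fun r : (I × I) × I => ((r.2, r.1.2) : I × I)) ⁻¹' {q : I × I | q.2 ≤ q.1} := rfl
        have h2 : {r : (I × I) × I | r.2 ≤ r.1.1} =
            (fun r : (I × I) × I => ((r.1.1, r.2) : I × I)) ⁻¹' {q : I × I | q.2 ≤ q.1} := rfl
        have : {r : (I × I) × I | r.1.2 ≤ r.2 ∧ r.2 ≤ r.1.1} =
            {r : (I × I) × I | r.1.2 ≤ r.2} ∩ {r | r.2 ≤ r.1.1} := rfl
        rw [this, h1, h2]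
        exact (hΔ.preimage (measurable_snd.prodMk (measurable_fst.snd))).inter
          (hΔ.preimage ((measurable_fst.fst).prodMk measurable_snd))
      have hfm : Measurable (fun r : (I × I) × I =>
          ({r : (I × I) × I | r.1.2 ≤ r.2 ∧ r.2 ≤ r.1.1}.indicator
            (fun r => K (r.1.1, r.2) * res' n (r.2, r.1.2))) r) := by
        exact Measurable.indicator
          ((hKmeas.comp ((measurable_fst.fst).prodMk measurable_snd)).mul
            (ih.comp (measurable_snd.prodMk measurable_fst.snd))) hsetm
      exact Measurable.lintegral_prod_right hfm
  -- res' agrees with res on the triangle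
  have hres_eq : ∀ n (t s : I), s ≤ t →
      res' n (t, s) = res (· ≤ ·) μ (fun a b => lam a b ^ p) n t s := by
    intro n
    induction n with
    | zero => intro t s h; rw [hres0]; exact hKeq t s h
    | succ n ih =>
      intro t s _
      rw [hresS]
      show _ = ∫⁻ u in {u : I | s ≤ u ∧ u ≤ t}, lam t u ^ p *
        res (· ≤ ·) μ (fun a b => lam a b ^ p) n u s ∂μ
      refine setLIntegral_congr_fun (hInt (t, s)) (fun ⦃u⦄ hu => ?_)
      rw [hKeq t u hu.2, ih u s hu.1]
  -- abbreviations
  set D : I → ℝ≥0∞ := fun t => d t x y ^ p with hD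
  set L : I → ℝ≥0∞ := fun s => Λ s x y ^ p with hL
  have hLmeas : Measurable L := (hΛmeas x y).pow_const p
  have hLD : ∀ s, L s ≤ D s := fun s => ENNReal.rpow_le_rpow (hC1b s x y) hp0.le
  -- base inequality
  have hbase : ∀ t, D t ≤ ∫⁻ s in {s : I | s ≤ t}, K (t, s) * L s ∂μ := by
    intro t
    have h1 : d t x y ≤ (∫⁻ s in {s : I | s ≤ t}, lam t s ^ p * Λ s x y ^ p ∂μ) ^ (1 / p) := by
      have := hC1a t x y
      rwa [hx, hy] at this
    have h2 : D t ≤ ((∫⁻ s in {s : I | s ≤ t}, lam t s ^ p * Λ s x y ^ p ∂μ) ^ (1 / p)) ^ p :=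
      ENNReal.rpow_le_rpow h1 hp0.le
    rw [← ENNReal.rpow_mul, one_div, inv_mul_cancel₀ hp0.ne', ENNReal.rpow_one] at h2
    refine h2.trans (le_of_eq ?_)
    refine setLIntegral_congr_fun (hIt t) (fun ⦃s⦄ hs => ?_)
    rw [hKeq t s hs]
  -- main induction
  have claim : ∀ n t, D t ≤ ∫⁻ s in {s : I | s ≤ t}, res' n (t, s) * L s ∂μ := by
    intro n
    induction n with
    | zero => intro t; exact hbase t
    | succ n ih =>
      intro t
      -- step 1: D t ≤ double integral
      have step1 : D t ≤ ∫⁻ s in {s : I | s ≤ t},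
          K (t, s) * ∫⁻ u in {u : I | u ≤ s}, res' n (s, u) * L u ∂μ ∂μ := by
        refine (hbase t).trans ?_
        refine setLIntegral_mono' (hIt t) fun s _ => ?_
        exact mul_le_mul_right ((hLD s).trans (ih s)) _
      -- the swap
      refine step1.trans ?_
      -- define the joint integrand
      set F : I → I → ℝ≥0∞ := fun s u =>
        ({r : I × I | r.1 ≤ t ∧ r.2 ≤ r.1}.indicator
          (fun r => K (t, r.1) * (res' n (r.1, r.2) * L r.2))) (s, u) with hF
      have hsetF : MeasurableSet {r : I × I | r.1 ≤ t ∧ r.2 ≤ r.1} := by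
        have h1 : {r : I × I | r.1 ≤ t} =
            (fun r : I × I => ((t, r.1) : I × I)) ⁻¹' {q : I × I | q.2 ≤ q.1} := rfl
        have : {r : I × I | r.1 ≤ t ∧ r.2 ≤ r.1} = {r : I × I | r.1 ≤ t} ∩ {r : I × I | r.2 ≤ r.1} := rfl
        rw [this, h1]
        exact (hΔ.preimage (measurable_const.prodMk measurable_fst)).inter hΔ
      have hFmeas : Measurable (Function.uncurry F) := by
        refine Measurable.indicator ?_ hsetF
        exact ((hKmeas.comp (measurable_const.prodMk measurable_fst)).mul
          ((hres'meas n).mul (hLmeas.comp measurable_snd)))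
      -- LHS equals ∫∫ F
      have eq1 : (∫⁻ s in {s : I | s ≤ t},
          K (t, s) * ∫⁻ u in {u : I | u ≤ s}, res' n (s, u) * L u ∂μ ∂μ)
          = ∫⁻ s, ∫⁻ u, F s u ∂μ ∂μ := by
        rw [← lintegral_indicator (hIt t)]
        congr 1
        ext s
        by_cases hs : s ≤ t
        · rw [Set.indicator_of_mem (show s ∈ {s : I | s ≤ t} from hs)]
          rw [← lintegral_indicator (hIt s)]
          rw [← lintegral_const_mul _ (by
            exact Measurable.indicator ((hres'meas n).comp
              (measurable_const.prodMk measurable_id) |>.mul hLmeas) (hIt s))]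
          congr 1
          ext u
          by_cases hu : u ≤ s
          · rw [Set.indicator_of_mem (show u ∈ {u : I | u ≤ s} from hu)]
            exact (Set.indicator_of_mem
              (show ((s, u) : I × I) ∈ {r : I × I | r.1 ≤ t ∧ r.2 ≤ r.1} from ⟨hs, hu⟩)
              (fun r : I × I => K (t, r.1) * (res' n (r.1, r.2) * L r.2))).symm
          · rw [Set.indicator_of_notMem (show u ∉ {u : I | u ≤ s} from hu), mul_zero]
            exact (Set.indicator_of_notMem
              (show ((s, u) : I × I) ∉ {r : I × I | r.1 ≤ t ∧ r.2 ≤ r.1} from fun h => hu h.2)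
              (fun r : I × I => K (t, r.1) * (res' n (r.1, r.2) * L r.2))).symm
        · rw [Set.indicator_of_notMem (show s ∉ {s : I | s ≤ t} from hs)]
          symm
          rw [← lintegral_zero (μ := μ)]
          refine lintegral_congr fun u => ?_
          exact Set.indicator_of_notMem
            (show ((s, u) : I × I) ∉ {r : I × I | r.1 ≤ t ∧ r.2 ≤ r.1} from fun h => hs h.1)
            (fun r : I × I => K (t, r.1) * (res' n (r.1, r.2) * L r.2))
      rw [eq1, lintegral_lintegral_swap hFmeas.aemeasurable]
      -- inner integral computes res' (n+1)
      have eq2 : ∀ u, (∫⁻ s, F s u ∂μ) = res' (n + 1) (t, u) * L u := by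
        intro u
        rw [hresS]
        rw [← lintegral_indicator (hInt (t, u))]
        rw [← lintegral_mul_const _ (by
          exact Measurable.indicator ((hKmeas.comp (measurable_const.prodMk measurable_id)).mul
            ((hres'meas n).comp (measurable_id.prodMk measurable_const))) (hInt (t, u)))]
        congr 1
        ext s
        by_cases hs : u ≤ s ∧ s ≤ t
        · rw [Set.indicator_of_mem (show s ∈ {v : I | u ≤ v ∧ v ≤ t} from hs), mul_assoc]
          exact Set.indicator_of_mem
            (show ((s, u) : I × I) ∈ {r : I × I | r.1 ≤ t ∧ r.2 ≤ r.1} from ⟨hs.2, hs.1⟩)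
            (fun r : I × I => K (t, r.1) * (res' n (r.1, r.2) * L r.2))
        · rw [Set.indicator_of_notMem (show s ∉ {v : I | u ≤ v ∧ v ≤ t} from hs), zero_mul]
          exact Set.indicator_of_notMem
            (show ((s, u) : I × I) ∉ {r : I × I | r.1 ≤ t ∧ r.2 ≤ r.1} from fun h => hs ⟨h.2, h.1⟩)
            (fun r : I × I => K (t, r.1) * (res' n (r.1, r.2) * L r.2))
      simp_rw [eq2]
      -- restrict to {u ≤ t}
      rw [← lintegral_indicator (hIt t)]
      refine le_of_eq ?_
      congr 1
      ext u
      by_cases hu : u ≤ t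
      · rw [Set.indicator_of_mem (show u ∈ {s : I | s ≤ t} from hu)]
      · rw [Set.indicator_of_notMem (show u ∉ {s : I | s ≤ t} from hu)]
        have : res' (n + 1) (t, u) = 0 := by
          rw [hresS]
          have : {v : I | u ≤ v ∧ v ≤ t} = ∅ := by
            ext v; simp only [Set.mem_setOf_eq, Set.mem_empty_iff_false, iff_false]
            exact fun h => hu (h.1.trans h.2)
          rw [this]
          simp
        rw [this, zero_mul]
  -- conclude
  have hDzero : ∀ t, D t = 0 := by
    intro t
    have hlim' : Tendsto (fun n : ℕ =>
        ∫⁻ s in {s : I | s ≤ t}, res' n (t, s) * L s ∂μ) atTop (nhds 0) := by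
      have := hlim t x y
      rw [hx, hy] at this
      refine this.congr fun n => ?_
      refine (setLIntegral_congr_fun (hIt t) (fun ⦃s⦄ hs => ?_))
      rw [hres_eq n t s hs]
    exact le_antisymm (ge_of_tendsto' hlim' fun n => claim n t) zero_le
  have hdzero : ∀ t, d t x y = 0 := by
    intro t
    have := hDzero t
    rw [hD] at this
    rcases (ENNReal.rpow_eq_zero_iff).1 this with ⟨h, _⟩ | ⟨_, hneg⟩
    · exact h
    · exact absurd hneg (not_lt.2 hp0.le)
  exact (hd0 x y).2 hdzero
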